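/- For the vector field X = (∂h/∂x₂ + h·∂h/∂x₁, -∂h/∂x₁ + h·∂h/∂x₂) associated to a C¹ function h : ℝ² → ℝ, the zero level set {h = 0} is invariant: any integral curve of X starting at a point where h = 0 remains in the zero set of h. -/

import Mathlib

open Set

/-- The zero level set of `h` is invariant for the vector field
`X = (∂h/∂x₂ + h ∂h/∂x₁, -∂h/∂x₁ + h ∂h/∂x₂)`: any solution of `ẋ = X(x)` on an open
interval starting at a point where `h = 0` stays in the zero set of `h`. -/
theorem zero_set_invariant (h : ℝ × ℝ → ℝ) (hh : ContDiff ℝ 1 h)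
    (X : ℝ × ℝ → ℝ × ℝ)
    (hX : ∀ p : ℝ × ℝ,
      X p = (fderiv ℝ h p (0, 1) + h p * fderiv ℝ h p (1, 0),
             -(fderiv ℝ h p (1, 0)) + h p * fderiv ℝ h p (0, 1)))
    (a b t₀ : ℝ) (ht₀ : t₀ ∈ Set.Ioo a b)
    (γ : ℝ → ℝ × ℝ) (hγ : ∀ t ∈ Set.Ioo a b, HasDerivAt γ (X (γ t)) t)
    (h0 : h (γ t₀) = 0) :
    ∀ t ∈ Set.Ioo a b, h (γ t) = 0 := by
  -- c t = |∇h(γ t)|²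
  set c : ℝ → ℝ := fun t => (fderiv ℝ h (γ t) (1, 0)) ^ 2 + (fderiv ℝ h (γ t) (0, 1)) ^ 2 with hc
  have hdiff : ∀ p : ℝ × ℝ, DifferentiableAt ℝ h p := fun p =>
    hh.differentiable one_ne_zero p
  -- derivative of u = h ∘ γ
  have hu : ∀ t ∈ Ioo a b, HasDerivAt (fun t => h (γ t)) (c t * h (γ t)) t := by
    intro t ht
    have hd : HasDerivAt (fun t => h (γ t)) (fderiv ℝ h (γ t) (X (γ t))) t :=
      (hdiff (γ t)).hasFDerivAt.comp_hasDerivAt t (hγ t ht)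
    convert hd using 1
    have key : ∀ x y : ℝ, fderiv ℝ h (γ t) (x, y)
        = x * fderiv ℝ h (γ t) (1, 0) + y * fderiv ℝ h (γ t) (0, 1) := by
      intro x y
      have : ((x, y) : ℝ × ℝ) = x • ((1, 0) : ℝ × ℝ) + y • ((0, 1) : ℝ × ℝ) := by
        simp [Prod.ext_iff]
      rw [this, map_add, map_smul, map_smul]; simp [smul_eq_mul]
    rw [hX (γ t), key]
    ring
  -- continuity of c on Ioo a b
  have hγc : ContinuousOn γ (Ioo a b) := fun t ht =>
    ((hγ t ht).continuousAt).continuousWithinAt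
  have hfc : Continuous (fderiv ℝ h) := hh.continuous_fderiv one_ne_zero
  have hcc : ContinuousOn c (Ioo a b) := by
    have h1 : ContinuousOn (fun t => fderiv ℝ h (γ t)) (Ioo a b) :=
      hfc.comp_continuousOn hγc
    have e1 : ContinuousOn (fun t => fderiv ℝ h (γ t) (1, 0)) (Ioo a b) :=
      h1.clm_apply continuousOn_const
    have e2 : ContinuousOn (fun t => fderiv ℝ h (γ t) (0, 1)) (Ioo a b) :=
      h1.clm_apply continuousOn_const
    exact (e1.pow 2).add (e2.pow 2)
  intro t ht
  -- shrink to compact subinterval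
  set m := min t₀ t with hm
  set M := max t₀ t with hM
  set a' := (a + m) / 2 with ha'
  set b' := (M + b) / 2 with hb'
  have ham : a < m := lt_min ht₀.1 ht.1
  have hMb : M < b := max_lt ht₀.2 ht.2
  have h1 : a < a' := by simp [ha']; linarith
  have h2 : a' < m := by simp [ha']; linarith
  have h3 : M < b' := by simp [hb']; linarith
  have h4 : b' < b := by simp [hb']; linarith
  have hsub : Icc a' b' ⊆ Ioo a b := fun x hx =>
    ⟨lt_of_lt_of_le h1 hx.1, lt_of_le_of_lt hx.2 h4⟩
  have hsub' : Ioo a' b' ⊆ Ioo a b := fun x hx => hsub (Ioo_subset_Icc_self hx)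
  -- bound on c on Icc a' b'
  obtain ⟨K, hK⟩ := (isCompact_Icc (a := a') (b := b')).exists_bound_of_continuousOn
    (hcc.mono hsub)
  have hK0 : 0 ≤ K := le_trans (norm_nonneg _) (hK a' ⟨le_rfl, by
    linarith [le_trans h2.le (le_trans (min_le_left _ _) (le_trans (le_max_left t₀ t) h3.le))]⟩)
  -- apply uniqueness
  have ht₀' : t₀ ∈ Ioo a' b' := ⟨lt_of_lt_of_le h2 (min_le_left _ _),
    lt_of_le_of_lt (le_max_left _ _) h3⟩
  have ht' : t ∈ Ioo a' b' := ⟨lt_of_lt_of_le h2 (min_le_right _ _),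
    lt_of_le_of_lt (le_max_right _ _) h3⟩
  set cl : ℝ → ℝ := fun τ => max a' (min τ b') with hcl
  have hclmem : ∀ τ, cl τ ∈ Icc a' b' := fun τ =>
    ⟨le_max_left _ _, max_le (le_of_lt (lt_of_lt_of_le h2 (le_trans (min_le_left _ _)
      (le_trans (le_max_left t₀ t) h3.le)))) (min_le_right _ _)⟩
  have hcleq : ∀ τ ∈ Icc a' b', cl τ = τ := by
    intro τ hτ
    simp [hcl, min_eq_left hτ.2, max_eq_right hτ.1]
  have := ODE_solution_unique_of_mem_Ioo (v := fun τ u => c (cl τ) * u) (s := fun _ => univ)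
    (K := K.toNNReal) (f := fun t => h (γ t)) (g := fun _ => 0) (t₀ := t₀)
    (fun τ _ => by
      have hlip : LipschitzWith ‖c (cl τ)‖₊ (fun u : ℝ => c (cl τ) * u) := by
        simpa [smul_eq_mul] using lipschitzWith_smul (β := ℝ) (c (cl τ))
      exact (hlip.weaken (by
        simpa only [norm_toNNReal] using Real.toNNReal_mono (hK (cl τ) (hclmem τ)))).lipschitzOnWith)
    ht₀'
    (fun τ hτ => ⟨by simp only [hcleq τ (Ioo_subset_Icc_self hτ)]; exact hu τ (hsub' hτ), mem_univ _⟩)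
    (fun τ hτ => ⟨by simpa using hasDerivAt_const τ (0:ℝ), mem_univ _⟩)
    (by simp [h0])
  simpa using this ht'
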